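/- Fix an edge coloring c of K_m with colors {1,…,k}. For each vertex v define g(v) ∈ {0,1}^k by g_i(v) = 1 iff exactly one edge incident to v has color i. If c is a CFON coloring of the line graph of K_m (every edge has a uniquely colored adjacent edge), then the map g is injective on V(K_m). -/
import Mathlib

lemma aux_count {m k : ℕ} (c : Sym2 (Fin m) → Fin k) (u v : Fin m) (huv : u ≠ v)
    (f : Sym2 (Fin m)) (hfd : ¬ f.IsDiag) (hfe : f ≠ s(u,v)) (hvf : v ∈ f)
    (huniq : ∀ f' : Sym2 (Fin m), ¬ f'.IsDiag → f' ≠ s(u,v) →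
      (∃ x, x ∈ s(u,v) ∧ x ∈ f') → f' ≠ f → c f' ≠ c f) :
    ¬ (((Finset.univ.filter (fun w : Fin m => w ≠ u ∧ c s(u, w) = c f)).card = 1) ↔
       ((Finset.univ.filter (fun w : Fin m => w ≠ v ∧ c s(v, w) = c f)).card = 1)) := by
  set y := Sym2.Mem.other hvf with hy
  have hyf : s(v, y) = f := Sym2.other_spec hvf
  have hyv : y ≠ v := by
    intro h
    apply hfd
    rw [← hyf, h]
    exact Sym2.mk_isDiag_iff.mpr rfl
  have hyu : y ≠ u := by
    intro h
    apply hfe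
    rw [← hyf, h, Sym2.eq_swap]
  -- other edges at u don't have color c f
  have hu : ∀ w : Fin m, w ≠ u → w ≠ v → c s(u, w) ≠ c f := by
    intro w hwu hwv
    apply huniq
    · simpa [Sym2.mk_isDiag_iff] using (Ne.symm hwu)
    · intro h
      rw [Sym2.eq_iff] at h
      rcases h with ⟨_, h⟩ | ⟨h, _⟩
      exacts [hwv h, huv h]
    · exact ⟨u, by simp, by simp⟩
    · intro h
      rw [← hyf, Sym2.eq_iff] at h
      rcases h with ⟨h, _⟩ | ⟨h, _⟩
      exacts [huv h, hyu h.symm]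
  have hv : ∀ w : Fin m, w ≠ v → w ≠ u → w ≠ y → c s(v, w) ≠ c f := by
    intro w hwv hwu hwy
    apply huniq
    · simpa [Sym2.mk_isDiag_iff] using (Ne.symm hwv)
    · intro h
      rw [Sym2.eq_iff] at h
      rcases h with ⟨h, _⟩ | ⟨_, h⟩
      exacts [huv h.symm, hwu h]
    · exact ⟨v, by simp, by simp⟩
    · intro h
      rw [← hyf, Sym2.eq_iff] at h
      rcases h with ⟨_, h⟩ | ⟨h, _⟩
      exacts [hwy h, hyv h.symm]
  by_cases hce : c s(u,v) = c f
  · -- filter at u = {v}, filter at v ⊇ {u, y}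
    have h1 : (Finset.univ.filter (fun w : Fin m => w ≠ u ∧ c s(u, w) = c f)) = {v} := by
      ext w
      simp only [Finset.mem_filter, Finset.mem_univ, true_and, Finset.mem_singleton]
      constructor
      · rintro ⟨hwu, hc⟩
        by_contra hwv
        exact hu w hwu hwv hc
      · rintro rfl; exact ⟨huv.symm, hce⟩
    have h2 : ({u, y} : Finset (Fin m)) ⊆
        (Finset.univ.filter (fun w : Fin m => w ≠ v ∧ c s(v, w) = c f)) := by
      intro w hw
      simp only [Finset.mem_insert, Finset.mem_singleton] at hw
      simp only [Finset.mem_filter, Finset.mem_univ, true_and]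
      rcases hw with rfl | rfl
      · exact ⟨huv, by rwa [Sym2.eq_swap]⟩
      · exact ⟨hyv, by rw [hyf]⟩
    intro hiff
    have := hiff.mp (by rw [h1]; simp)
    have hle := Finset.card_le_card h2
    rw [this, Finset.card_insert_of_notMem (by simp [hyu.symm]), Finset.card_singleton] at hle
    omega
  · have h1 : (Finset.univ.filter (fun w : Fin m => w ≠ u ∧ c s(u, w) = c f)) = ∅ := by
      ext w
      simp only [Finset.mem_filter, Finset.mem_univ, true_and, Finset.notMem_empty, iff_false]
      rintro ⟨hwu, hc⟩
      rcases eq_or_ne w v with rfl | hwv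
      · exact hce hc
      · exact hu w hwu hwv hc
    have h2 : (Finset.univ.filter (fun w : Fin m => w ≠ v ∧ c s(v, w) = c f)) = {y} := by
      ext w
      simp only [Finset.mem_filter, Finset.mem_univ, true_and, Finset.mem_singleton]
      constructor
      · rintro ⟨hwv, hc⟩
        by_contra hwy
        rcases eq_or_ne w u with rfl | hwu
        · exact hce (by rwa [Sym2.eq_swap] at hc)
        · exact hv w hwv hwu hwy hc
      · rintro rfl; exact ⟨hyv, by rw [hyf]⟩
    intro hiff
    have := hiff.mpr (by rw [h2]; simp)
    rw [h1] at this
    simp at this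

theorem fingerprint_injective (m k : ℕ) (hm : 2 ≤ m)
    (c : Sym2 (Fin m) → Fin k)
    (hCF : ∀ e : Sym2 (Fin m), ¬ e.IsDiag →
      ∃ f : Sym2 (Fin m), ¬ f.IsDiag ∧ f ≠ e ∧ (∃ x, x ∈ e ∧ x ∈ f) ∧
        ∀ f' : Sym2 (Fin m), ¬ f'.IsDiag → f' ≠ e → (∃ x, x ∈ e ∧ x ∈ f') →
          f' ≠ f → c f' ≠ c f) :
    Function.Injective (fun v : Fin m => fun i : Fin k =>
      (Finset.univ.filter (fun w : Fin m => w ≠ v ∧ c s(v, w) = i)).card = 1) := by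
  intro u v h
  by_contra huv
  obtain ⟨f, hfd, hfe, ⟨x, hxe, hxf⟩, huniq⟩ :=
    hCF s(u,v) (by simpa [Sym2.mk_isDiag_iff] using huv)
  have hiff : ∀ i, ((Finset.univ.filter (fun w : Fin m => w ≠ u ∧ c s(u, w) = i)).card = 1) ↔
      ((Finset.univ.filter (fun w : Fin m => w ≠ v ∧ c s(v, w) = i)).card = 1) := by
    intro i
    exact iff_of_eq (congrFun h i)
  rcases Sym2.mem_iff.mp hxe with hx | hx
  · -- x = u : apply aux with roles swapped
    rw [hx] at hxf
    clear hx
    refine aux_count c v u (Ne.symm huv) f hfd (by rwa [Sym2.eq_swap]) hxf ?_ ?_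
    · intro f' h1 h2 h3 h4
      exact huniq f' h1 (by rwa [Sym2.eq_swap] at h2) (by rwa [Sym2.eq_swap] at h3) h4
    · exact (hiff (c f)).symm
  · rw [hx] at hxf
    exact aux_count c u v huv f hfd hfe hxf huniq (hiff (c f))
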